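/- Separation of curve intersections on the box boundary: let p ∈ ℝ², let e be a vertical line at horizontal distance at least ϱd > 0 from p, and let q, r ∈ e be such that the angle ∠qpr is at least α > 0 and the segments pq, pr lie on the same side of e's perpendicular through p. Then ‖q − r‖ ≥ 2ϱd·tan(α/2). -/

import Mathlib

open Real EuclideanGeometry

lemma tan_half_ineq {α θ : ℝ} (hα : 0 < α) (hαπ : α < Real.pi) (hθπ : θ ≤ Real.pi)
    (h : α ≤ θ) : Real.tan (α / 2) * (1 + Real.cos θ) ≤ Real.sin θ := by
  have hπ := Real.pi_pos
  have hcβ : 0 < Real.cos (α / 2) :=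
    Real.cos_pos_of_mem_Ioo ⟨by linarith, by linarith⟩
  rw [Real.tan_eq_sin_div_cos, div_mul_eq_mul_div, div_le_iff₀ hcβ]
  have h1 : Real.sin θ = 2 * Real.sin (θ / 2) * Real.cos (θ / 2) := by
    rw [← Real.sin_two_mul]; ring_nf
  have h2 : Real.cos (θ / 2) ^ 2 = 1 / 2 + Real.cos θ / 2 := by
    have := Real.cos_sq (θ / 2)
    rwa [show 2 * (θ / 2) = θ by ring] at this
  have hcφ : 0 ≤ Real.cos (θ / 2) :=
    Real.cos_nonneg_of_mem_Icc ⟨by linarith, by linarith⟩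
  have hsin : 0 ≤ Real.sin (θ / 2 - α / 2) :=
    Real.sin_nonneg_of_nonneg_of_le_pi (by linarith) (by linarith)
  rw [Real.sin_sub] at hsin
  have h2' : 1 + Real.cos θ = 2 * Real.cos (θ / 2) ^ 2 := by linarith
  calc Real.sin (α / 2) * (1 + Real.cos θ)
      = 2 * Real.cos (θ / 2) * (Real.cos (θ / 2) * Real.sin (α / 2)) := by rw [h2']; ring
    _ ≤ 2 * Real.cos (θ / 2) * (Real.sin (θ / 2) * Real.cos (α / 2)) := by
        nlinarith [mul_nonneg hcφ hsin]
    _ = Real.sin θ * Real.cos (α / 2) := by rw [h1]; ring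

/-- Separation of curve intersections on the box boundary: if `q`, `r` lie on a
vertical line at horizontal distance at least `ϱd > 0` from `p`, the angle `∠ q p r`
is at least `α > 0`, and the segments `pq`, `pr` lie on the same side of the
horizontal line through `p`, then `‖q − r‖ ≥ 2ϱd·tan(α/2)`. -/
theorem stmt16 (ϱ d α : ℝ) (hϱd : 0 < ϱ * d) (hα : 0 < α) (hαπ : α < Real.pi)
    (p q r : EuclideanSpace ℝ (Fin 2)) (xe : ℝ)
    (hq : q 0 = xe) (hr : r 0 = xe)
    (hdist : ϱ * d ≤ |xe - p 0|)
    (hside : 0 ≤ (q 1 - p 1) * (r 1 - p 1))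
    (hangle : α ≤ EuclideanGeometry.angle q p r) :
    2 * ϱ * d * Real.tan (α / 2) ≤ dist q r := by
  set Δ : ℝ := xe - p 0 with hΔ
  set a : ℝ := q 1 - p 1 with ha
  set b : ℝ := r 1 - p 1 with hb
  have hq0 : q 0 - p 0 = Δ := by rw [hq]
  have hr0 : r 0 - p 0 = Δ := by rw [hr]
  set θ : ℝ := EuclideanGeometry.angle q p r with hθ
  have hθeq : θ = InnerProductGeometry.angle (q - p) (r - p) := by
    rw [hθ, EuclideanGeometry.angle, vsub_eq_sub, vsub_eq_sub]
  -- inner products in coordinates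
  have huv : (inner ℝ (q - p) (r - p) : ℝ) = Δ * Δ + a * b := by
    simp only [PiLp.inner_apply, Fin.sum_univ_two, RCLike.inner_apply, starRingEnd_apply,
      star_trivial, PiLp.sub_apply]
    rw [hq0, hr0, ha, hb]; ring
  have huu : (inner ℝ (q - p) (q - p) : ℝ) = Δ * Δ + a * a := by
    simp only [PiLp.inner_apply, Fin.sum_univ_two, RCLike.inner_apply, starRingEnd_apply,
      star_trivial, PiLp.sub_apply]
    rw [hq0]
  have hvv : (inner ℝ (r - p) (r - p) : ℝ) = Δ * Δ + b * b := by
    simp only [PiLp.inner_apply, Fin.sum_univ_two, RCLike.inner_apply, starRingEnd_apply,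
      star_trivial, PiLp.sub_apply]
    rw [hr0]
  set N : ℝ := ‖q - p‖ * ‖r - p‖ with hN
  have hcos : Real.cos θ * N = Δ * Δ + a * b := by
    rw [hθeq, InnerProductGeometry.cos_angle_mul_norm_mul_norm, huv]
  have hsin : Real.sin θ * N = |Δ| * |a - b| := by
    rw [hθeq, InnerProductGeometry.sin_angle_mul_norm_mul_norm, huu, hvv, huv]
    rw [show (Δ * Δ + a * a) * (Δ * Δ + b * b) - (Δ * Δ + a * b) * (Δ * Δ + a * b)
        = (Δ * (a - b)) ^ 2 by ring]
    rw [Real.sqrt_sq_eq_abs, abs_mul]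
  -- norms dominate |Δ|
  have hDpos : 0 < |Δ| := lt_of_lt_of_le hϱd hdist
  have hnormq : |Δ| ≤ ‖q - p‖ := by
    have h2 : ‖q - p‖ ^ 2 = Δ * Δ + a * a := by
      rw [← real_inner_self_eq_norm_sq, huu]
    nlinarith [norm_nonneg (q - p), sq_abs Δ]
  have hnormr : |Δ| ≤ ‖r - p‖ := by
    have h2 : ‖r - p‖ ^ 2 = Δ * Δ + b * b := by
      rw [← real_inner_self_eq_norm_sq, hvv]
    nlinarith [norm_nonneg (r - p), sq_abs Δ]
  have hNge : |Δ| * |Δ| ≤ N := by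
    exact mul_le_mul hnormq hnormr (le_of_lt hDpos) (norm_nonneg _)
  have hNpos : 0 < N := lt_of_lt_of_le (by positivity) hNge
  -- half-angle inequality
  have hθπ : θ ≤ Real.pi := by rw [hθeq]; exact InnerProductGeometry.angle_le_pi _ _
  have hhalf := tan_half_ineq hα hαπ hθπ hangle
  have hT : 0 ≤ Real.tan (α / 2) := by
    have := Real.pi_pos
    exact le_of_lt (Real.tan_pos_of_pos_of_lt_pi_div_two (by linarith) (by linarith))
  -- multiply half-angle ineq by N
  have key : Real.tan (α / 2) * (N + (Δ * Δ + a * b)) ≤ |Δ| * |a - b| := by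
    have := mul_le_mul_of_nonneg_right hhalf (le_of_lt hNpos)
    calc Real.tan (α / 2) * (N + (Δ * Δ + a * b))
        = Real.tan (α / 2) * (1 + Real.cos θ) * N := by rw [← hcos]; ring
      _ ≤ Real.sin θ * N := this
      _ = |Δ| * |a - b| := hsin
  have habs : Δ * Δ = |Δ| * |Δ| := (abs_mul_abs_self Δ).symm
  have key2 : Real.tan (α / 2) * (2 * (|Δ| * |Δ|)) ≤ |Δ| * |a - b| := by
    refine le_trans ?_ key
    apply mul_le_mul_of_nonneg_left _ hT
    rw [habs] at *
    linarith
  have key3 : 2 * (ϱ * d) * Real.tan (α / 2) ≤ |a - b| := by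
    have h4 : Real.tan (α / 2) * (2 * |Δ|) ≤ |a - b| := by
      rw [← mul_le_mul_iff_right₀ hDpos]
      calc |Δ| * (Real.tan (α / 2) * (2 * |Δ|))
          = Real.tan (α / 2) * (2 * (|Δ| * |Δ|)) := by ring
        _ ≤ |Δ| * |a - b| := key2
    calc 2 * (ϱ * d) * Real.tan (α / 2) ≤ 2 * |Δ| * Real.tan (α / 2) := by
          apply mul_le_mul_of_nonneg_right _ hT; linarith
      _ = Real.tan (α / 2) * (2 * |Δ|) := by ring
      _ ≤ |a - b| := h4
  have hd : dist q r = |a - b| := by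
    rw [EuclideanSpace.dist_eq, Fin.sum_univ_two, hq, hr]
    simp only [sub_self, Real.dist_eq]
    rw [show |(0:ℝ)| ^ 2 + |q 1 - r 1| ^ 2 = |q 1 - r 1| ^ 2 by simp,
      Real.sqrt_sq (abs_nonneg _)]
    congr 1; rw [ha, hb]; ring
  rw [hd]
  calc 2 * ϱ * d * Real.tan (α / 2) = 2 * (ϱ * d) * Real.tan (α / 2) := by ring
    _ ≤ |a - b| := key3
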